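/- Let H be a complex Hilbert space and let x, y, e ∈ H with ‖e‖ = 1. Then |⟨x, e⟩ · ⟨e, y⟩| ≤ (1/2) · ( |⟨x, y⟩| + ‖x‖·‖y‖ ). -/

import Mathlib

theorem abs_inner_mul_inner_le_half
    {H : Type*} [NormedAddCommGroup H] [InnerProductSpace ℂ H]
    (x y e : H) (he : ‖e‖ = 1) :
    ‖(inner ℂ x e : ℂ) * (inner ℂ e y : ℂ)‖ ≤
      (1 / 2) * (‖(inner ℂ x y : ℂ)‖ + ‖x‖ * ‖y‖) := by
  set a : ℂ := inner ℂ e y with ha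
  set z : H := ((2 : ℂ) * a) • e - y with hzdef
  have hee : (inner ℂ e e : ℂ) = 1 := by
    rw [inner_self_eq_norm_sq_to_K, he]; norm_num
  have hz : (inner ℂ x z : ℂ) = 2 * a * inner ℂ x e - inner ℂ x y := by
    simp [hzdef, inner_sub_right, inner_smul_right]
  have hzz : (inner ℂ z z : ℂ) = inner ℂ y y := by
    simp [hzdef, inner_sub_right, inner_sub_left, inner_smul_right, inner_smul_left,
      hee, ← ha, inner_conj_symm, -inner_self_eq_norm_sq_to_K]
    rw [show (inner ℂ y e : ℂ) = (starRingEnd ℂ) a by rw [ha, ← inner_conj_symm]]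
    ring
  have hnz : ‖z‖ = ‖y‖ := by
    have h2 : (‖z‖ : ℝ) ^ 2 = (‖y‖ : ℝ) ^ 2 := by
      rw [← @inner_self_eq_norm_sq ℂ, ← @inner_self_eq_norm_sq ℂ, hzz]
    nlinarith [norm_nonneg z, norm_nonneg y]
  have key : (2 : ℂ) * (inner ℂ x e * inner ℂ e y) = inner ℂ x z + inner ℂ x y := by
    rw [hz, ← ha]; ring
  have h3 : ‖(2 : ℂ) * (inner ℂ x e * (inner ℂ e y : ℂ))‖ ≤ ‖(inner ℂ x z : ℂ)‖ + ‖(inner ℂ x y : ℂ)‖ := by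
    rw [key]; exact norm_add_le _ _
  have h4 : ‖(inner ℂ x z : ℂ)‖ ≤ ‖x‖ * ‖y‖ := by
    calc ‖(inner ℂ x z : ℂ)‖ ≤ ‖x‖ * ‖z‖ := norm_inner_le_norm x z
    _ = ‖x‖ * ‖y‖ := by rw [hnz]
  have h5 : ‖(2 : ℂ) * (inner ℂ x e * (inner ℂ e y : ℂ))‖
      = 2 * ‖(inner ℂ x e : ℂ) * (inner ℂ e y : ℂ)‖ := by
    rw [norm_mul]; norm_num
  rw [h5] at h3
  linarith
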